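/- Let A be a finite set and G ≤ Sym(A) a permutation group. Suppose P, P' ⊆ A satisfy |P| ≥ 5, |P'| ≥ 5, and P ∩ P' ≠ ∅, and suppose Alt(P) ≤ G and Alt(P') ≤ G, where Alt(Q) denotes the group of even permutations of A supported inside Q (fixing all points outside Q). Then Alt(P ∪ P') ≤ G. -/

import Mathlib

open Equiv Equiv.Perm in
private lemma pairSwap_mem {A : Type*} [Fintype A] [DecidableEq A]
    (G : Subgroup (Equiv.Perm A)) (Q : Set A)
    (hAlt : ∀ σ : Equiv.Perm A, Equiv.Perm.sign σ = 1 → (∀ a ∉ Q, σ a = a) → σ ∈ G)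
    {x y c d : A} (hx : x ∈ Q) (hy : y ∈ Q) (hc : c ∈ Q) (hd : d ∈ Q)
    (hxy : x ≠ y) (hcd : c ≠ d) : swap x y * swap c d ∈ G := by
  apply hAlt
  · rw [map_mul, Equiv.Perm.sign_swap hxy, Equiv.Perm.sign_swap hcd]
    norm_num
  · intro t ht
    have htc : t ≠ c := fun h => ht (h ▸ hc)
    have htd : t ≠ d := fun h => ht (h ▸ hd)
    have htx : t ≠ x := fun h => ht (h ▸ hx)
    have hty : t ≠ y := fun h => ht (h ▸ hy)
    rw [Equiv.Perm.mul_apply, swap_apply_of_ne_of_ne htc htd,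
      swap_apply_of_ne_of_ne htx hty]

open Equiv Equiv.Perm in
private lemma abab5 {A : Type*} [DecidableEq A] {z0 a b c d : A}
    (h1 : z0 ≠ a) (h2 : z0 ≠ b) (h3 : z0 ≠ c) (h4 : z0 ≠ d)
    (h5 : a ≠ b) (h6 : a ≠ c) (h7 : a ≠ d) (h8 : b ≠ c) (h9 : b ≠ d) (h10 : c ≠ d) :
    swap z0 a * swap a b =
      (swap z0 a * swap c d) * (swap z0 b * swap c d) *
        ((swap z0 a * swap c d) * (swap z0 b * swap c d)) := by
  have := h1.symm; have := h2.symm; have := h3.symm; have := h4.symm; have := h5.symm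
  have := h6.symm; have := h7.symm; have := h8.symm; have := h9.symm; have := h10.symm
  ext t
  by_cases t1 : t = z0 <;> by_cases t2 : t = a <;> by_cases t3 : t = b <;>
    by_cases t4 : t = c <;> by_cases t5 : t = d <;>
    simp_all [Perm.mul_apply, swap_apply_def]

set_option maxHeartbeats 2000000 in
open Equiv Equiv.Perm in
private lemma abab7 {A : Type*} [DecidableEq A] {z0 a b c d e f : A}
    (h1 : z0 ≠ a) (h2 : z0 ≠ b) (h3 : z0 ≠ c) (h4 : z0 ≠ d) (h5 : z0 ≠ e) (h6 : z0 ≠ f)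
    (h7 : a ≠ b) (h8 : a ≠ c) (h9 : a ≠ d) (h10 : a ≠ e) (h11 : a ≠ f)
    (h12 : b ≠ c) (h13 : b ≠ d) (h14 : b ≠ e) (h15 : b ≠ f)
    (h16 : c ≠ d) (h17 : c ≠ e) (h18 : c ≠ f) (h19 : d ≠ e) (h20 : d ≠ f) (h21 : e ≠ f) :
    swap z0 a * swap a b =
      (swap z0 a * swap c d) * (swap z0 b * swap e f) *
        ((swap z0 a * swap c d) * (swap z0 b * swap e f)) := by
  have := h1.symm; have := h2.symm; have := h3.symm; have := h4.symm; have := h5.symm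
  have := h6.symm; have := h7.symm; have := h8.symm; have := h9.symm; have := h10.symm
  have := h11.symm; have := h12.symm; have := h13.symm; have := h14.symm; have := h15.symm
  have := h16.symm; have := h17.symm; have := h18.symm; have := h19.symm; have := h20.symm
  have := h21.symm
  ext t
  by_cases t1 : t = z0 <;> by_cases t2 : t = a <;> by_cases t3 : t = b <;>
    by_cases t4 : t = c <;> by_cases t5 : t = d <;> by_cases t6 : t = e <;>
    by_cases t7 : t = f <;>
    simp_all [Perm.mul_apply, swap_apply_def]

open Equiv Equiv.Perm in
/-- The hard mixed case: a 3-cycle `(z0 a b)` through a common point `z0 ∈ P ∩ P'` with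
`a ∈ P \ P'` and `b ∈ P' \ P` lies in `G`. -/
private lemma hard_mem {A : Type*} [Fintype A] [DecidableEq A]
    (G : Subgroup (Equiv.Perm A)) (P P' : Set A)
    (hP : 5 ≤ P.ncard) (hP' : 5 ≤ P'.ncard)
    (hAltP : ∀ σ : Equiv.Perm A, Equiv.Perm.sign σ = 1 → (∀ a ∉ P, σ a = a) → σ ∈ G)
    (hAltP' : ∀ σ : Equiv.Perm A, Equiv.Perm.sign σ = 1 → (∀ a ∉ P', σ a = a) → σ ∈ G)
    {z0 a b : A} (hz0 : z0 ∈ P ∩ P') (haP : a ∈ P) (haP' : a ∉ P')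
    (hbP' : b ∈ P') (hbP : b ∉ P) :
    swap z0 a * swap a b ∈ G := by
  have hz0a : z0 ≠ a := fun h => haP' (h ▸ hz0.2)
  have hz0b : z0 ≠ b := fun h => hbP (h ▸ hz0.1)
  have hab : a ≠ b := fun h => hbP (h ▸ haP)
  by_cases hbig : 1 < ((P ∩ P') \ {z0}).ncard
  · obtain ⟨c, d, hc, hd, hcd⟩ := (Set.one_lt_ncard_iff).mp hbig
    have hcP : c ∈ P := hc.1.1
    have hcP' : c ∈ P' := hc.1.2
    have hdP : d ∈ P := hd.1.1
    have hdP' : d ∈ P' := hd.1.2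
    have hz0c : z0 ≠ c := fun h => hc.2 (by simp [← h])
    have hz0d : z0 ≠ d := fun h => hd.2 (by simp [← h])
    have hac : a ≠ c := fun h => haP' (h ▸ hcP')
    have had : a ≠ d := fun h => haP' (h ▸ hdP')
    have hbc : b ≠ c := fun h => hbP (h ▸ hcP)
    have hbd : b ≠ d := fun h => hbP (h ▸ hdP)
    rw [abab5 hz0a hz0b hz0c hz0d hab hac had hbc hbd hcd]
    exact mul_mem
      (mul_mem (pairSwap_mem G P hAltP hz0.1 haP hcP hdP hz0a hcd)
        (pairSwap_mem G P' hAltP' hz0.2 hbP' hcP' hdP' hz0b hcd))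
      (mul_mem (pairSwap_mem G P hAltP hz0.1 haP hcP hdP hz0a hcd)
        (pairSwap_mem G P' hAltP' hz0.2 hbP' hcP' hdP' hz0b hcd))
  · -- the intersection is small, so both differences are large
    push_neg at hbig
    have hIle : (P ∩ P').ncard ≤ 2 := by
      have := Set.ncard_le_ncard_diff_add_ncard (P ∩ P') {z0}
      simp only [Set.ncard_singleton] at this
      omega
    have hPd : 3 ≤ (P \ P').ncard := by
      have h1 := Set.ncard_le_ncard_diff_add_ncard P (P ∩ P')
      rw [Set.diff_self_inter] at h1
      omega
    have hP'd : 3 ≤ (P' \ P).ncard := by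
      have h1 := Set.ncard_le_ncard_diff_add_ncard P' (P' ∩ P)
      rw [Set.diff_self_inter, Set.inter_comm] at h1
      omega
    have hcd2 : 1 < ((P \ P') \ {a}).ncard := by
      have := Set.ncard_le_ncard_diff_add_ncard (P \ P') {a}
      simp only [Set.ncard_singleton] at this
      omega
    have hef2 : 1 < ((P' \ P) \ {b}).ncard := by
      have := Set.ncard_le_ncard_diff_add_ncard (P' \ P) {b}
      simp only [Set.ncard_singleton] at this
      omega
    obtain ⟨c, d, hc, hd, hcd⟩ := (Set.one_lt_ncard_iff).mp hcd2
    obtain ⟨e, f, he, hf, hef⟩ := (Set.one_lt_ncard_iff).mp hef2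
    have hcP : c ∈ P := hc.1.1
    have hcP' : c ∉ P' := hc.1.2
    have hdP : d ∈ P := hd.1.1
    have hdP' : d ∉ P' := hd.1.2
    have heP' : e ∈ P' := he.1.1
    have heP : e ∉ P := he.1.2
    have hfP' : f ∈ P' := hf.1.1
    have hfP : f ∉ P := hf.1.2
    have hac : a ≠ c := fun h => hc.2 (by simp [← h])
    have had : a ≠ d := fun h => hd.2 (by simp [← h])
    have hbe : b ≠ e := fun h => he.2 (by simp [← h])
    have hbf : b ≠ f := fun h => hf.2 (by simp [← h])
    have hz0c : z0 ≠ c := fun h => hcP' (h ▸ hz0.2)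
    have hz0d : z0 ≠ d := fun h => hdP' (h ▸ hz0.2)
    have hz0e : z0 ≠ e := fun h => heP (h ▸ hz0.1)
    have hz0f : z0 ≠ f := fun h => hfP (h ▸ hz0.1)
    have hae : a ≠ e := fun h => heP (h ▸ haP)
    have haf : a ≠ f := fun h => hfP (h ▸ haP)
    have hbc : b ≠ c := fun h => hbP (h.symm ▸ hcP)
    have hbd : b ≠ d := fun h => hbP (h.symm ▸ hdP)
    have hce : c ≠ e := fun h => heP (h ▸ hcP)
    have hcf : c ≠ f := fun h => hfP (h ▸ hcP)
    have hde : d ≠ e := fun h => heP (h ▸ hdP)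
    have hdf : d ≠ f := fun h => hfP (h ▸ hdP)
    rw [abab7 hz0a hz0b hz0c hz0d hz0e hz0f hab hac had hae haf hbc hbd hbe hbf
      hcd hce hcf hde hdf hef]
    exact mul_mem
      (mul_mem (pairSwap_mem G P hAltP hz0.1 haP hcP hdP hz0a hcd)
        (pairSwap_mem G P' hAltP' hz0.2 hbP' heP' hfP' hz0b hef))
      (mul_mem (pairSwap_mem G P hAltP hz0.1 haP hcP hdP hz0a hcd)
        (pairSwap_mem G P' hAltP' hz0.2 hbP' heP' hfP' hz0b hef))

open Equiv Equiv.Perm in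
/-- Any 3-cycle through the common point `z0`, with the other two points in `P ∪ P'`,
lies in `G`. -/
private lemma cyc0_mem {A : Type*} [Fintype A] [DecidableEq A]
    (G : Subgroup (Equiv.Perm A)) (P P' : Set A)
    (hP : 5 ≤ P.ncard) (hP' : 5 ≤ P'.ncard)
    (hAltP : ∀ σ : Equiv.Perm A, Equiv.Perm.sign σ = 1 → (∀ a ∉ P, σ a = a) → σ ∈ G)
    (hAltP' : ∀ σ : Equiv.Perm A, Equiv.Perm.sign σ = 1 → (∀ a ∉ P', σ a = a) → σ ∈ G)
    {z0 a b : A} (hz0 : z0 ∈ P ∩ P') (ha : a ∈ P ∪ P') (hb : b ∈ P ∪ P')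
    (hz0a : z0 ≠ a) (hz0b : z0 ≠ b) (hab : a ≠ b) :
    swap z0 a * swap a b ∈ G := by
  by_cases haP : a ∈ P
  · by_cases hbP : b ∈ P
    · exact pairSwap_mem G P hAltP hz0.1 haP haP hbP hz0a hab
    · have hbP' : b ∈ P' := hb.resolve_left hbP
      by_cases haP' : a ∈ P'
      · exact pairSwap_mem G P' hAltP' hz0.2 haP' haP' hbP' hz0a hab
      · exact hard_mem G P P' hP hP' hAltP hAltP' hz0 haP haP' hbP' hbP
  · have haP' : a ∈ P' := ha.resolve_left haP
    by_cases hbP' : b ∈ P'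
    · exact pairSwap_mem G P' hAltP' hz0.2 haP' haP' hbP' hz0a hab
    · have hbP : b ∈ P := hb.resolve_right hbP'
      exact hard_mem G P' P hP' hP hAltP' hAltP ⟨hz0.2, hz0.1⟩ haP' haP hbP hbP'

open Equiv Equiv.Perm in
private lemma rot3 {A : Type*} [DecidableEq A] {x y z : A}
    (hxy : x ≠ y) (hyz : y ≠ z) (hxz : x ≠ z) :
    swap x y * swap y z = swap y z * swap z x := by
  have := hxy.symm; have := hyz.symm; have := hxz.symm
  ext t
  by_cases t1 : t = x <;> by_cases t2 : t = y <;> by_cases t3 : t = z <;>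
    simp_all [Perm.mul_apply, swap_apply_def]

open Equiv Equiv.Perm in
private lemma reduce3 {A : Type*} [DecidableEq A] {w x y z : A}
    (hxy : x ≠ y) (hyz : y ≠ z) (hxz : x ≠ z)
    (hwx : w ≠ x) (hwy : w ≠ y) (hwz : w ≠ z) :
    swap x y * swap y z = (swap w x * swap x y) * (swap w y * swap y z) := by
  have := hxy.symm; have := hyz.symm; have := hxz.symm
  have := hwx.symm; have := hwy.symm; have := hwz.symm
  ext t
  by_cases t1 : t = x <;> by_cases t2 : t = y <;> by_cases t3 : t = z <;>
    by_cases t4 : t = w <;>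
    simp_all [Perm.mul_apply, swap_apply_def]

open Equiv Equiv.Perm in
/-- Any 3-cycle with all three points in `P ∪ P'` lies in `G`. -/
private lemma cyc_mem {A : Type*} [Fintype A] [DecidableEq A]
    (G : Subgroup (Equiv.Perm A)) (P P' : Set A)
    (hP : 5 ≤ P.ncard) (hP' : 5 ≤ P'.ncard) (hint : (P ∩ P').Nonempty)
    (hAltP : ∀ σ : Equiv.Perm A, Equiv.Perm.sign σ = 1 → (∀ a ∉ P, σ a = a) → σ ∈ G)
    (hAltP' : ∀ σ : Equiv.Perm A, Equiv.Perm.sign σ = 1 → (∀ a ∉ P', σ a = a) → σ ∈ G)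
    {x y z : A} (hx : x ∈ P ∪ P') (hy : y ∈ P ∪ P') (hz : z ∈ P ∪ P')
    (hxy : x ≠ y) (hyz : y ≠ z) (hxz : x ≠ z) :
    swap x y * swap y z ∈ G := by
  obtain ⟨z0, hz0⟩ := hint
  by_cases e1 : z0 = x
  · subst e1
    exact cyc0_mem G P P' hP hP' hAltP hAltP' hz0 hy hz hxy hxz hyz
  by_cases e2 : z0 = y
  · subst e2
    rw [rot3 hxy hyz hxz]
    exact cyc0_mem G P P' hP hP' hAltP hAltP' hz0 hz hx hyz (Ne.symm hxy) (Ne.symm hxz)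
  by_cases e3 : z0 = z
  · subst e3
    rw [rot3 hxy hyz hxz, rot3 hyz (Ne.symm hxz) (Ne.symm hxy)]
    exact cyc0_mem G P P' hP hP' hAltP hAltP' hz0 hx hy (Ne.symm hxz) (Ne.symm hyz) hxy
  · rw [reduce3 hxy hyz hxz e1 e2 e3]
    exact mul_mem
      (cyc0_mem G P P' hP hP' hAltP hAltP' hz0 hx hy e1 e2 hxy)
      (cyc0_mem G P P' hP hP' hAltP hAltP' hz0 hy hz e2 e3 hyz)

open Equiv Equiv.Perm in
/-- Every 3-cycle is a product of two transpositions sharing a point. -/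
private lemma threeCycle_decomp {B : Type*} [Fintype B] [DecidableEq B] {θ : Equiv.Perm B}
    (h : θ.IsThreeCycle) :
    ∃ x y z : B, x ≠ y ∧ y ≠ z ∧ x ≠ z ∧ θ = swap x y * swap y z := by
  obtain ⟨x, hx, -⟩ := h.isCycle
  have h3 : θ ^ 3 = 1 := by rw [← h.orderOf]; exact pow_orderOf_eq_one θ
  have hθ3 : ∀ t, θ (θ (θ t)) = t := by
    intro t
    have : (θ ^ 3) t = t := by rw [h3]; rfl
    simpa [pow_succ, Perm.mul_apply] using this
  have hyx : θ x ≠ x := hx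
  have hzy : θ (θ x) ≠ θ x := fun hcon => hx (θ.injective hcon)
  have hzx : θ (θ x) ≠ x := by
    intro hcon
    have : θ (θ (θ x)) = θ x := congrArg θ hcon
    rw [hθ3] at this
    exact hx this.symm
  have hmemx : x ∈ θ.support := Perm.mem_support.mpr hx
  have hsupp : θ.support = {x, θ x, θ (θ x)} := by
    refine (Finset.eq_of_subset_of_card_le ?_ ?_).symm
    · intro t ht
      simp only [Finset.mem_insert, Finset.mem_singleton] at ht
      rcases ht with rfl | rfl | rfl
      · exact hmemx
      · exact Perm.apply_mem_support.mpr hmemx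
      · exact Perm.apply_mem_support.mpr (Perm.apply_mem_support.mpr hmemx)
    · rw [h.card_support]
      rw [Finset.card_insert_of_notMem (by simp [hyx.symm, hzx.symm]),
        Finset.card_insert_of_notMem (by simp [hzy.symm]), Finset.card_singleton]
  have hfix : ∀ t, t ≠ x → t ≠ θ x → t ≠ θ (θ x) → θ t = t := by
    intro t h1 h2 h3'
    have : t ∉ θ.support := by simp [hsupp, h1, h2, h3']
    exact Perm.notMem_support.mp this
  refine ⟨x, θ x, θ (θ x), hyx.symm, hzy.symm, hzx.symm, ?_⟩
  ext t
  rw [Perm.mul_apply]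
  by_cases t1 : t = x
  · subst t1
    rw [swap_apply_of_ne_of_ne hyx.symm hzx.symm, swap_apply_left]
  by_cases t2 : t = θ x
  · subst t2
    rw [swap_apply_left, swap_apply_of_ne_of_ne hzx hzy]
  by_cases t3 : t = θ (θ x)
  · subst t3
    rw [swap_apply_right, swap_apply_right, hθ3]
  · rw [swap_apply_of_ne_of_ne t2 t3, swap_apply_of_ne_of_ne t1 t2, hfix t t1 t2 t3]

/-- If `G ≤ Sym(A)` contains the alternating groups on overlapping subsets `P` and
`P'` of size at least 5 (as even permutations supported inside the respective set),
then `G` contains the alternating group on `P ∪ P'`. -/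
theorem alt_union_le_of_alt_le {A : Type*} [Fintype A] [DecidableEq A]
    (G : Subgroup (Equiv.Perm A)) (P P' : Set A)
    (hP : 5 ≤ P.ncard) (hP' : 5 ≤ P'.ncard) (hint : (P ∩ P').Nonempty)
    (hAltP : ∀ σ : Equiv.Perm A, Equiv.Perm.sign σ = 1 → (∀ a ∉ P, σ a = a) → σ ∈ G)
    (hAltP' : ∀ σ : Equiv.Perm A, Equiv.Perm.sign σ = 1 → (∀ a ∉ P', σ a = a) → σ ∈ G) :
    ∀ σ : Equiv.Perm A, Equiv.Perm.sign σ = 1 → (∀ a ∉ P ∪ P', σ a = a) → σ ∈ G := by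
  classical
  intro σ hsign hsupp
  set S : Set A := P ∪ P' with hS
  letI : Fintype {a // a ∈ S} := Subtype.fintype _
  have hσS : ∀ a, σ a ∈ S ↔ a ∈ S := by
    intro a
    rw [Iff.comm]
    constructor
    · intro haS
      by_contra hcon
      have h1 : σ (σ a) = σ a := hsupp _ hcon
      have := σ.injective h1
      rw [this] at hcon
      exact hcon haS
    · intro haS
      by_contra hcon
      rw [hsupp a hcon] at haS
      exact hcon haS
  have key : ∀ ρ ∈ Subgroup.closure {ρ : Equiv.Perm {a // a ∈ S} | ρ.IsThreeCycle},
      Equiv.Perm.ofSubtype ρ ∈ G := by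
    intro ρ hρ
    induction hρ using Subgroup.closure_induction with
    | mem ρ hρ =>
        obtain ⟨x, y, z, hxy, hyz, hxz, hdec⟩ := threeCycle_decomp hρ
        rw [hdec, map_mul, Equiv.Perm.ofSubtype_swap_eq, Equiv.Perm.ofSubtype_swap_eq]
        exact cyc_mem G P P' hP hP' hint hAltP hAltP' x.2 y.2 z.2
          (fun hc => hxy (Subtype.ext hc)) (fun hc => hyz (Subtype.ext hc))
          (fun hc => hxz (Subtype.ext hc))
    | one => rw [map_one]; exact one_mem G
    | mul ρ1 ρ2 h1 h2 ih1 ih2 => rw [map_mul]; exact mul_mem ih1 ih2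
    | inv ρ hρ ih => rw [map_inv]; exact inv_mem ih
  have hofs : Equiv.Perm.ofSubtype (σ.subtypePerm hσS) = σ :=
    Equiv.Perm.ofSubtype_subtypePerm hσS fun a ha => by
      by_contra hcon; exact ha (hsupp a hcon)
  have hsignτ : Equiv.Perm.sign (σ.subtypePerm hσS) = 1 := by
    have := Equiv.Perm.sign_ofSubtype (σ.subtypePerm hσS)
    rw [hofs, hsign] at this
    exact this.symm
  have hτalt : σ.subtypePerm hσS ∈
      Subgroup.closure {ρ : Equiv.Perm {a // a ∈ S} | ρ.IsThreeCycle} := by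
    rw [Equiv.Perm.closure_three_cycles_eq_alternating]
    exact Equiv.Perm.mem_alternatingGroup.mpr hsignτ
  rw [← hofs]
  exact key _ hτalt
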